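/- Stochastic dominance between assignments implies Rawlsian dominance: if assignment y stochastically dominates assignment x (for every agent i and every object o, the probability under y of receiving an object weakly preferred to o is at least that under x, and y ≠ x), then y R-dominates x. -/
import Mathlib


open Finset

/-- An n×n matrix with nonnegative real entries whose rows and columns each sum to 1. -/
def Bistochastic {n : ℕ} (x : Fin n → Fin n → ℝ) : Prop :=
  (∀ i o, 0 ≤ x i o) ∧ (∀ i, ∑ o, x i o = 1) ∧ (∀ o, ∑ i, x i o = 1)

/-- `tailProb rank x i k` = probability that agent `i` receives an object ranked `k`-th
or worse (ranks are 0-indexed: rank 0 = most preferred). -/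
def tailProb {n : ℕ} (rank : Fin n → Fin n → Fin n) (x : Fin n → Fin n → ℝ)
    (i k : Fin n) : ℝ :=
  ∑ o ∈ Finset.univ.filter (fun o => k ≤ rank i o), x i o

/-- The values of `v` rearranged in non-increasing order. -/
noncomputable def sortedDesc {n : ℕ} (v : Fin n → ℝ) : Fin n → ℝ :=
  fun j => v (Tuple.sort (fun i => -v i) j)

/-- Block `t` of `Bvec rank x` is the non-increasing rearrangement of the tail
probabilities at threshold `n-1-t`; so blocks run from the worst rank down. -/
noncomputable def Bvec {n : ℕ} (rank : Fin n → Fin n → Fin n) (x : Fin n → Fin n → ℝ) :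
    Fin n → Fin n → ℝ :=
  fun t => sortedDesc (fun i => tailProb rank x i t.rev)

/-- Lexicographic strict order on doubly-indexed vectors (outer index first). -/
def BlockLexLt {α β : Type*} [LinearOrder α] [LinearOrder β] (u v : α → β → ℝ) : Prop :=
  ∃ t s, u t s < v t s ∧ ∀ t' s', (t' < t ∨ (t' = t ∧ s' < s)) → u t' s' = v t' s'

/-- `x` Rawlsian-dominates `y`. -/
def RDom {n : ℕ} (rank : Fin n → Fin n → Fin n) (x y : Fin n → Fin n → ℝ) : Prop :=
  BlockLexLt (Bvec rank x) (Bvec rank y)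

/-- A Rawlsian assignment: a bistochastic matrix not R-dominated by any other. -/
def Rawlsian {n : ℕ} (rank : Fin n → Fin n → Fin n) (x : Fin n → Fin n → ℝ) : Prop :=
  Bistochastic x ∧ ∀ y, Bistochastic y → ¬ RDom rank y x

/-- `y` stochastically dominates `x` (w.r.t. the ranks): for every agent and every
object, the probability of an object weakly preferred to it is weakly larger, and `y ≠ x`. -/
def SDDominates {n : ℕ} (rank : Fin n → Fin n → Fin n) (y x : Fin n → Fin n → ℝ) : Prop :=
  y ≠ x ∧ ∀ i o, (∑ o' ∈ Finset.univ.filter (fun o' => rank i o' ≤ rank i o), x i o') ≤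
    ∑ o' ∈ Finset.univ.filter (fun o' => rank i o' ≤ rank i o), y i o'

/-- `x` is sd-efficient: no bistochastic matrix stochastically dominates it. -/
def SDEfficient {n : ℕ} (rank : Fin n → Fin n → Fin n) (x : Fin n → Fin n → ℝ) : Prop :=
  ¬ ∃ y, Bistochastic y ∧ SDDominates rank y x

lemma sortedDesc_antitone {n : ℕ} (v : Fin n → ℝ) : Antitone (sortedDesc v) := by
  intro a b hab
  have h := Tuple.monotone_sort (fun i => -v i) hab
  simpa [sortedDesc, Function.comp] using h

lemma sum_sortedDesc {n : ℕ} (v : Fin n → ℝ) : ∑ j, sortedDesc v j = ∑ i, v i :=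
  Equiv.sum_comp (Tuple.sort fun i => -v i) v

lemma sortedDesc_mono {n : ℕ} {u v : Fin n → ℝ} (h : ∀ i, u i ≤ v i) (j : Fin n) :
    sortedDesc u j ≤ sortedDesc v j := by
  classical
  set σ := Tuple.sort (fun i => -u i) with hσ
  set τ := Tuple.sort (fun i => -v i) with hτ
  have hAcard : ((Finset.Iic j).image σ).card = (j : ℕ) + 1 := by
    rw [Finset.card_image_of_injective _ σ.injective, Fin.card_Iic]
  have hBcard : ((Finset.Ici j).image τ).card = n - (j : ℕ) := by
    rw [Finset.card_image_of_injective _ τ.injective, Fin.card_Ici]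
  have hinter : (((Finset.Iic j).image σ) ∩ ((Finset.Ici j).image τ)).Nonempty := by
    rw [← Finset.card_pos]
    have h1 := Finset.card_union_add_card_inter ((Finset.Iic j).image σ) ((Finset.Ici j).image τ)
    have h2 : (((Finset.Iic j).image σ) ∪ ((Finset.Ici j).image τ)).card ≤ n := by
      have := Finset.card_le_univ (((Finset.Iic j).image σ) ∪ ((Finset.Ici j).image τ))
      simpa using this
    have hj := j.isLt
    omega
  obtain ⟨i, hi⟩ := hinter
  rw [Finset.mem_inter] at hi
  obtain ⟨hiA, hiB⟩ := hi
  obtain ⟨a, ha, rfl⟩ := Finset.mem_image.1 hiA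
  obtain ⟨b, hb, hba⟩ := Finset.mem_image.1 hiB
  rw [Finset.mem_Iic] at ha
  rw [Finset.mem_Ici] at hb
  have h1 : sortedDesc u j ≤ sortedDesc u a := sortedDesc_antitone u ha
  have h2 : sortedDesc v b ≤ sortedDesc v j := sortedDesc_antitone v hb
  have h3 : sortedDesc u a = u (σ a) := rfl
  have h4 : sortedDesc v b = v (τ b) := rfl
  rw [h3] at h1; rw [h4] at h2
  rw [hba] at h2
  exact h1.trans ((h (σ a)).trans h2)

/-- Stochastic dominance implies Rawlsian dominance. -/
theorem sd_implies_rdom {n : ℕ} (rank : Fin n → Fin n → Fin n)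
    (hrank : ∀ i, Function.Bijective (rank i))
    (x y : Fin n → Fin n → ℝ) (hx : Bistochastic x) (hy : Bistochastic y)
    (hsd : SDDominates rank y x) :
    RDom rank y x := by
  classical
  obtain ⟨hne, hcum⟩ := hsd
  have hcum' : ∀ (i m : Fin n),
      (∑ o' ∈ univ.filter (fun o' => rank i o' ≤ m), x i o') ≤
      ∑ o' ∈ univ.filter (fun o' => rank i o' ≤ m), y i o' := by
    intro i m
    obtain ⟨o, ho⟩ := (hrank i).2 m
    simpa [ho] using hcum i o
  -- split of tail probabilities
  have hsplit : ∀ (z : Fin n → Fin n → ℝ), (∀ j, ∑ o, z j o = 1) → ∀ (i k : Fin n),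
      tailProb rank z i k
        = 1 - ∑ o' ∈ univ.filter (fun o' => ¬ k ≤ rank i o'), z i o' := by
    intro z hz i k
    have h := Finset.sum_filter_add_sum_filter_not univ (fun o => k ≤ rank i o) (z i)
    rw [hz i] at h
    unfold tailProb
    linarith
  have htail : ∀ (i k : Fin n), tailProb rank y i k ≤ tailProb rank x i k := by
    intro i k
    rcases Nat.eq_zero_or_pos k.val with h0 | hpos
    · have hk : ∀ o : Fin n, k ≤ rank i o := fun o => by
        rw [Fin.le_def, h0]; exact Nat.zero_le _
      unfold tailProb
      rw [Finset.filter_true_of_mem (fun o _ => hk o), hx.2.1 i, hy.2.1 i]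
    · set m : Fin n := ⟨k.val - 1, lt_of_le_of_lt (Nat.sub_le _ _) k.isLt⟩ with hm
      have hfe : (univ.filter (fun o' : Fin n => ¬ k ≤ rank i o'))
          = univ.filter (fun o' => rank i o' ≤ m) := by
        apply Finset.filter_congr
        intro o' _
        simp only [not_le, Fin.lt_def, Fin.le_def, hm, eq_iff_iff]
        omega
      rw [hsplit x hx.2.1 i k, hsplit y hy.2.1 i k, hfe]
      have := hcum' i m
      linarith
  -- strictness somewhere
  have hstrict : ∃ i k, tailProb rank y i k < tailProb rank x i k := by
    by_contra hc
    push_neg at hc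
    have heq : ∀ i k, tailProb rank y i k = tailProb rank x i k :=
      fun i k => le_antisymm (htail i k) (hc i k)
    apply hne
    funext i o
    have key : ∀ j : ℕ, (∑ o' ∈ univ.filter (fun o' => j ≤ (rank i o' : ℕ)), y i o')
        = ∑ o' ∈ univ.filter (fun o' => j ≤ (rank i o' : ℕ)), x i o' := by
      intro j
      rcases lt_or_ge j n with hj | hj
      · have h := heq i ⟨j, hj⟩
        unfold tailProb at h
        simpa [Fin.le_def] using h
      · have he : univ.filter (fun o' : Fin n => j ≤ (rank i o' : ℕ)) = ∅ := by
          apply Finset.filter_eq_empty_iff.2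
          intro o' _
          have := (rank i o').isLt
          omega
        simp [he]
    have hdiff : ∀ z : Fin n → Fin n → ℝ,
        (∑ o' ∈ univ.filter (fun o' => (rank i o : ℕ) ≤ (rank i o' : ℕ)), z i o')
        = z i o + ∑ o' ∈ univ.filter (fun o' => (rank i o : ℕ) + 1 ≤ (rank i o' : ℕ)), z i o' := by
      intro z
      have hset : univ.filter (fun o' : Fin n => (rank i o : ℕ) ≤ (rank i o' : ℕ))
          = insert o (univ.filter fun o' : Fin n => (rank i o : ℕ) + 1 ≤ (rank i o' : ℕ)) := by
        ext o'
        simp only [Finset.mem_filter, Finset.mem_insert, Finset.mem_univ, true_and]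
        constructor
        · intro h
          rcases eq_or_lt_of_le h with he | hl
          · left
            exact (hrank i).1 (Fin.ext he.symm)
          · right; omega
        · rintro (rfl | h)
          · exact le_refl _
          · omega
      rw [hset, Finset.sum_insert (by simp)]
    have h1 := key (rank i o)
    have h2 := key ((rank i o : ℕ) + 1)
    rw [hdiff x, hdiff y] at h1
    linarith
  -- pointwise Bvec domination
  have hB : ∀ t s, Bvec rank y t s ≤ Bvec rank x t s := fun t s =>
    sortedDesc_mono (fun i => htail i t.rev) s
  obtain ⟨i0, k0, hk0⟩ := hstrict
  set t0 : Fin n := k0.rev with ht0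
  have hsum : ∑ s, Bvec rank y t0 s < ∑ s, Bvec rank x t0 s := by
    have e1 : ∑ s, Bvec rank y t0 s = ∑ i, tailProb rank y i t0.rev :=
      sum_sortedDesc _
    have e2 : ∑ s, Bvec rank x t0 s = ∑ i, tailProb rank x i t0.rev :=
      sum_sortedDesc _
    rw [e1, e2, ht0, Fin.rev_rev]
    exact Finset.sum_lt_sum (fun i _ => htail i k0) ⟨i0, Finset.mem_univ _, hk0⟩
  have hBne : ∃ s, Bvec rank y t0 s ≠ Bvec rank x t0 s := by
    by_contra hc
    push_neg at hc
    have : ∑ s, Bvec rank y t0 s = ∑ s, Bvec rank x t0 s :=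
      Finset.sum_congr rfl fun s _ => hc s
    linarith
  -- lexicographic first difference
  set T : Finset (Fin n) := univ.filter (fun t => ∃ s, Bvec rank y t s ≠ Bvec rank x t s)
    with hTdef
  have hT : T.Nonempty := ⟨t0, by simpa [hTdef] using hBne⟩
  set t1 := T.min' hT with ht1
  have ht1T : t1 ∈ T := T.min'_mem hT
  obtain ⟨s0, hs0⟩ : ∃ s, Bvec rank y t1 s ≠ Bvec rank x t1 s := by
    simpa [hTdef] using ht1T
  set S : Finset (Fin n) := univ.filter (fun s => Bvec rank y t1 s ≠ Bvec rank x t1 s)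
    with hSdef
  have hS : S.Nonempty := ⟨s0, Finset.mem_filter.2 ⟨Finset.mem_univ _, hs0⟩⟩
  set s1 := S.min' hS with hs1
  refine ⟨t1, s1, lt_of_le_of_ne (hB t1 s1) ?_, ?_⟩
  · exact (Finset.mem_filter.1 (S.min'_mem hS)).2
  · rintro t' s' (ht' | ⟨rfl, hs'⟩)
    · by_contra hne'
      have hmem : t' ∈ T := by simp [hTdef]; exact ⟨s', hne'⟩
      exact absurd (T.min'_le _ hmem) (not_le.2 ht')
    · by_contra hne'
      have hmem : s' ∈ S := by simp [hSdef]; exact hne'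
      exact absurd (S.min'_le _ hmem) (not_le.2 hs')
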